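/- Let N ≥ 1, let S be a symmetric N×N real matrix with nonnegative entries, and suppose (ρ_x)_{x=1}^N are compactly supported symmetric Borel probability measures on ℝ whose Stieltjes transforms m_x(z) = ∫ (τ − z)⁻¹ ρ_x(dτ) satisfy −1/m_x(z) = z + ∑_{y=1}^N S_{xy} m_y(z) for every x and every z in the complex upper half-plane. Let μ_{x,k} := ∫ τ^k ρ_x(dτ). Then μ_{x,0} = 1, all odd moments vanish, and for every x and every k ≥ 1 the even moments satisfy the recursion μ_{x,2k} = ∑_{y=1}^N S_{xy} ∑_{n=0}^{k−1} μ_{x,2(k−n−1)} μ_{y,2n}. -/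

import Mathlib

open MeasureTheory

def measSupport (μ : Measure ℝ) : Set ℝ :=
  {x : ℝ | ∀ U ∈ nhds x, μ U ≠ 0}

lemma measSupport_compl_null (μ : Measure ℝ) : μ (measSupport μ)ᶜ = 0 := by
  obtain ⟨T, hTc, hT𝒮, hTU⟩ := TopologicalSpace.isOpen_sUnion_countable
    {U : Set ℝ | IsOpen U ∧ μ U = 0} (fun s hs => hs.1)
  have hsub : (measSupport μ)ᶜ ⊆ ⋃₀ {U : Set ℝ | IsOpen U ∧ μ U = 0} := by
    intro x hx
    simp only [measSupport, Set.mem_compl_iff, Set.mem_setOf_eq, not_forall] at hx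
    obtain ⟨U, hU, hU0⟩ := hx
    rw [not_not] at hU0
    obtain ⟨V, hVU, hVopen, hxV⟩ := mem_nhds_iff.mp hU
    exact ⟨V, ⟨hVopen, measure_mono_null hVU hU0⟩, hxV⟩
  refine measure_mono_null hsub ?_
  rw [← hTU]
  exact (measure_sUnion_null_iff hTc).2 (fun s hs => (hT𝒮 hs).2)

lemma ae_mem_measSupport (μ : Measure ℝ) : ∀ᵐ τ ∂μ, τ ∈ measSupport μ := by
  have := measSupport_compl_null μ
  filter_upwards [measure_eq_zero_iff_ae_notMem.mp this] with τ hτ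
  simpa using hτ

/-- Coefficient extraction: if a "polynomial" in `(t*I)⁻¹` is `O(t^{-(J+1)})` for all
large `t`, then all its coefficients vanish. -/
lemma extract_coeffs (a : ℕ → ℂ) (J : ℕ) (t0 C : ℝ) (ht0 : 1 ≤ t0)
    (h : ∀ t : ℝ, t0 ≤ t →
      ‖∑ i ∈ Finset.range (J+1), a i * ((t : ℂ) * Complex.I)⁻¹ ^ i‖ ≤ C / t ^ (J+1)) :
    ∀ i ≤ J, a i = 0 := by
  have ht00 : (0:ℝ) < t0 := lt_of_lt_of_le zero_lt_one ht0
  have hC0 : 0 ≤ C := by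
    have h0 := le_trans (norm_nonneg _) (h t0 le_rfl)
    have := (div_nonneg_iff.mp h0)
    rcases this with ⟨h1, _⟩ | ⟨_, h2⟩
    · exact h1
    · nlinarith [pow_pos ht00 (J+1)]
  intro i
  induction i using Nat.strong_induction_on with
  | _ i IH =>
    intro hiJ
    set C' : ℝ := C + ∑ i' ∈ Finset.Ico (i+1) (J+1), ‖a i'‖ with hC'
    have hC'0 : 0 ≤ C' := by
      have : 0 ≤ ∑ i' ∈ Finset.Ico (i+1) (J+1), ‖a i'‖ :=
        Finset.sum_nonneg fun _ _ => norm_nonneg _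
      linarith
    have key : ∀ t : ℝ, t0 ≤ t → ‖a i‖ ≤ C' / t := by
      intro t ht
      have ht1 : (1:ℝ) ≤ t := le_trans ht0 ht
      have ht0' : (0:ℝ) < t := lt_of_lt_of_le zero_lt_one ht1
      set w : ℂ := ((t : ℂ) * Complex.I)⁻¹ with hw
      have hwnorm : ‖w‖ = 1 / t := by
        rw [hw, norm_inv]
        simp [abs_of_pos ht0']
      have hw1 : ‖w‖ ≤ 1 := by rw [hwnorm]; exact (div_le_one ht0').mpr ht1
      have hsplit : ∑ i' ∈ Finset.range (J+1), a i' * w ^ i'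
          = a i * w ^ i + ∑ i' ∈ Finset.Ico (i+1) (J+1), a i' * w ^ i' := by
        rw [Finset.range_eq_Ico,
          ← Finset.sum_Ico_consecutive _ (Nat.zero_le i) (show i ≤ J+1 by omega)]
        have h1 : ∑ i' ∈ Finset.Ico 0 i, a i' * w ^ i' = 0 :=
          Finset.sum_eq_zero fun i' hi' => by
            rw [IH i' (Finset.mem_Ico.mp hi').2
              (le_trans (Nat.le_of_lt_succ (Nat.lt_succ_of_lt (Finset.mem_Ico.mp hi').2)) hiJ),
              zero_mul]
        rw [h1, zero_add, Finset.sum_eq_sum_Ico_succ_bot (Nat.lt_succ_of_le hiJ)]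
      have hnorm1 : ‖a i * w ^ i‖ ≤ ‖∑ i' ∈ Finset.range (J+1), a i' * w ^ i'‖
          + ∑ i' ∈ Finset.Ico (i+1) (J+1), ‖a i'‖ * ‖w‖ ^ i' := by
        calc ‖a i * w ^ i‖
            = ‖(∑ i' ∈ Finset.range (J+1), a i' * w ^ i')
                - ∑ i' ∈ Finset.Ico (i+1) (J+1), a i' * w ^ i'‖ := by
              rw [hsplit, add_sub_cancel_right]
          _ ≤ _ := by
              refine le_trans (norm_sub_le _ _) ?_
              gcongr
              refine le_trans (norm_sum_le _ _) ?_
              refine Finset.sum_le_sum fun i' _ => ?_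
              rw [norm_mul, norm_pow]
      have htail : ∑ i' ∈ Finset.Ico (i+1) (J+1), ‖a i'‖ * ‖w‖ ^ i'
          ≤ (∑ i' ∈ Finset.Ico (i+1) (J+1), ‖a i'‖) * ‖w‖ ^ (i+1) := by
        rw [Finset.sum_mul]
        refine Finset.sum_le_sum fun i' hi' => ?_
        have h1 : i + 1 ≤ i' := (Finset.mem_Ico.mp hi').1
        exact mul_le_mul_of_nonneg_left
          (pow_le_pow_of_le_one (norm_nonneg w) hw1 h1) (norm_nonneg _)
      have hCt : C / t ^ (J+1) ≤ C * ‖w‖ ^ (i+1) := by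
        rw [hwnorm, div_pow, one_pow, mul_one_div]
        have hpe : t ^ (i+1) ≤ t ^ (J+1) := pow_le_pow_right₀ ht1 (by omega)
        gcongr
      have hfinal : ‖a i‖ * ‖w‖ ^ i ≤ C' * (‖w‖ ^ i * ‖w‖) := by
        have e1 : ‖a i * w ^ i‖ = ‖a i‖ * ‖w‖ ^ i := by rw [norm_mul, norm_pow]
        have := le_trans hnorm1 (add_le_add (h t ht) htail)
        rw [e1] at this
        calc ‖a i‖ * ‖w‖ ^ i ≤ C * ‖w‖ ^ (i+1)
              + (∑ i' ∈ Finset.Ico (i+1) (J+1), ‖a i'‖) * ‖w‖ ^ (i+1) :=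
            le_trans this (by gcongr)
          _ = C' * (‖w‖ ^ i * ‖w‖) := by rw [hC']; ring
      have hwpos : 0 < ‖w‖ ^ i := pow_pos (by rw [hwnorm]; positivity) i
      have : ‖a i‖ ≤ C' * ‖w‖ := by
        have h2 : ‖a i‖ * ‖w‖ ^ i ≤ (C' * ‖w‖) * ‖w‖ ^ i := by
          calc ‖a i‖ * ‖w‖ ^ i ≤ C' * (‖w‖ ^ i * ‖w‖) := hfinal
            _ = (C' * ‖w‖) * ‖w‖ ^ i := by ring
        exact le_of_mul_le_mul_right h2 hwpos
      rw [hwnorm] at this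
      calc ‖a i‖ ≤ C' * (1/t) := this
        _ = C' / t := by ring
    have hten : Filter.Tendsto (fun t : ℝ => C' / t) Filter.atTop (nhds 0) :=
      Filter.Tendsto.div_atTop tendsto_const_nhds Filter.tendsto_id
    have hle : ‖a i‖ ≤ 0 := by
      refine ge_of_tendsto hten ?_
      filter_upwards [Filter.eventually_ge_atTop t0] with t ht
      exact key t ht
    simpa using norm_le_zero_iff.mp hle

lemma cauchy_split (f g : ℕ → ℂ) (w : ℂ) (K L : ℕ) (hLK : L ≤ K) :
    (∑ i ∈ Finset.range K, f i * w ^ i) * (∑ n ∈ Finset.range K, g n * w ^ n)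
      = (∑ k ∈ Finset.range L, (∑ n ∈ Finset.range (k+1), f (k - n) * g n) * w ^ k)
        + ∑ p ∈ (Finset.range K ×ˢ Finset.range K).filter (fun p => ¬ p.1 + p.2 < L),
            f p.1 * g p.2 * w ^ (p.1 + p.2) := by
  have h1 : (∑ i ∈ Finset.range K, f i * w ^ i) * (∑ n ∈ Finset.range K, g n * w ^ n)
      = ∑ p ∈ Finset.range K ×ˢ Finset.range K, f p.1 * g p.2 * w ^ (p.1 + p.2) := by
    rw [Finset.sum_mul_sum, ← Finset.sum_product']
    refine Finset.sum_congr rfl fun p _ => ?_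
    rw [pow_add]; ring
  rw [h1, ← Finset.sum_filter_add_sum_filter_not (Finset.range K ×ˢ Finset.range K)
    (fun p => p.1 + p.2 < L)]
  congr 1
  have h2 : ∑ k ∈ Finset.range L, (∑ n ∈ Finset.range (k+1), f (k - n) * g n) * w ^ k
      = ∑ k ∈ Finset.range L, ∑ n ∈ Finset.range (k+1), f (k - n) * g n * w ^ k := by
    refine Finset.sum_congr rfl fun k _ => ?_
    rw [Finset.sum_mul]
  rw [h2, show (∑ k ∈ Finset.range L, ∑ n ∈ Finset.range (k+1), f (k - n) * g n * w ^ k)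
      = ∑ q ∈ (Finset.range L).sigma (fun k => Finset.range (k+1)),
          f (q.1 - q.2) * g q.2 * w ^ q.1 from
      (Finset.sum_sigma (Finset.range L) (fun k => Finset.range (k+1))
        (fun q => f (q.1 - q.2) * g q.2 * w ^ q.1)).symm]
  refine Finset.sum_nbij' (fun p => (⟨p.1 + p.2, p.2⟩ : Σ _ : ℕ, ℕ))
    (fun q => (q.1 - q.2, q.2)) ?_ ?_ ?_ ?_ ?_
  · intro p hp
    simp only [Finset.mem_filter, Finset.mem_product, Finset.mem_range] at hp
    simp only [Finset.mem_sigma, Finset.mem_range]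
    omega
  · intro q hq
    simp only [Finset.mem_sigma, Finset.mem_range] at hq
    simp only [Finset.mem_filter, Finset.mem_product, Finset.mem_range]
    omega
  · intro p hp
    simp only [Finset.mem_filter, Finset.mem_product, Finset.mem_range] at hp
    simp only [Nat.add_sub_cancel]
  · intro q hq
    simp only [Finset.mem_sigma, Finset.mem_range] at hq
    have : q.1 - q.2 + q.2 = q.1 := by omega
    exact Sigma.ext this (by simp)
  · intro p hp
    simp only [Nat.add_sub_cancel]

lemma high_bound (f g : ℕ → ℂ) (w : ℂ) (hw : ‖w‖ ≤ 1) (K L : ℕ) (Cf Cg : ℝ)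
    (hCf : 0 ≤ Cf) (hCg : 0 ≤ Cg)
    (hf : ∀ i < K, ‖f i‖ ≤ Cf) (hg : ∀ i < K, ‖g i‖ ≤ Cg) :
    ‖∑ p ∈ (Finset.range K ×ˢ Finset.range K).filter (fun p => ¬ p.1 + p.2 < L),
        f p.1 * g p.2 * w ^ (p.1 + p.2)‖ ≤ (K^2 : ℝ) * (Cf * Cg * ‖w‖ ^ L) := by
  refine le_trans (norm_sum_le _ _) ?_
  have hterm : ∀ p ∈ (Finset.range K ×ˢ Finset.range K).filter (fun p => ¬ p.1 + p.2 < L),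
      ‖f p.1 * g p.2 * w ^ (p.1 + p.2)‖ ≤ Cf * Cg * ‖w‖ ^ L := by
    intro p hp
    simp only [Finset.mem_filter, Finset.mem_product, Finset.mem_range, not_lt] at hp
    rw [norm_mul, norm_mul, norm_pow]
    have h1 : ‖w‖ ^ (p.1 + p.2) ≤ ‖w‖ ^ L :=
      pow_le_pow_of_le_one (norm_nonneg w) hw hp.2
    have h2 : ‖f p.1‖ * ‖g p.2‖ ≤ Cf * Cg :=
      mul_le_mul (hf _ hp.1.1) (hg _ hp.1.2) (norm_nonneg _) hCf
    exact mul_le_mul h2 h1 (pow_nonneg (norm_nonneg _) _) (by positivity)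
  refine le_trans (Finset.sum_le_sum hterm) ?_
  rw [Finset.sum_const, nsmul_eq_mul]
  have hcard : ((Finset.range K ×ˢ Finset.range K).filter
      (fun p => ¬ p.1 + p.2 < L)).card ≤ K^2 := by
    refine le_trans (Finset.card_filter_le _ _) ?_
    rw [Finset.card_product, Finset.card_range]
    ring_nf; omega
  have : (((Finset.range K ×ˢ Finset.range K).filter
      (fun p => ¬ p.1 + p.2 < L)).card : ℝ) ≤ (K^2 : ℝ) := by
    exact_mod_cast hcard
  exact mul_le_mul_of_nonneg_right this (by positivity)

lemma geom_expand (τ z : ℂ) (hz : z ≠ 0) (hτz : τ - z ≠ 0) (M : ℕ) :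
    (τ - z)⁻¹ = -(∑ i ∈ Finset.range (M+1), τ ^ i * z⁻¹ ^ (i+1))
      + z⁻¹ ^ (M+1) * (τ ^ (M+1) * (τ - z)⁻¹) := by
  have hbase : (τ - z)⁻¹ = -z⁻¹ + z⁻¹ * (τ * (τ - z)⁻¹) := by
    field_simp
    ring
  induction M with
  | zero =>
    simpa using hbase
  | succ M ih =>
    have key : z⁻¹ ^ (M+1) * (τ ^ (M+1) * (τ - z)⁻¹)
        = -(τ ^ (M+1) * z⁻¹ ^ (M+2)) + z⁻¹ ^ (M+2) * (τ ^ (M+2) * (τ - z)⁻¹) := by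
      linear_combination (τ ^ (M+1) * z⁻¹ ^ (M+1)) * hbase
    conv_lhs => rw [ih]
    rw [Finset.sum_range_succ (fun i => τ ^ i * z⁻¹ ^ (i+1)) (M+1), key]
    ring

lemma even_odd_split (f : ℕ → ℝ) (k : ℕ) (hk : 1 ≤ k) (hodd : ∀ n, f (2*n+1) = 0) :
    ∑ n ∈ Finset.range (2*k-1), f n = ∑ n ∈ Finset.range k, f (2*n) := by
  rw [← Finset.sum_filter_add_sum_filter_not (Finset.range (2*k-1)) (fun n => Even n)]
  have h2 : ∑ n ∈ (Finset.range (2*k-1)).filter (fun n => ¬ Even n), f n = 0 := by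
    refine Finset.sum_eq_zero fun n hn => ?_
    simp only [Finset.mem_filter, Nat.not_even_iff_odd] at hn
    obtain ⟨m, hm⟩ := hn.2
    rw [hm]; exact hodd m
  rw [h2, add_zero]
  refine Finset.sum_nbij' (fun n => n / 2) (fun n => 2 * n) ?_ ?_ ?_ ?_ ?_
  · intro n hn
    simp only [Finset.mem_filter, Finset.mem_range] at hn
    obtain ⟨m, hm⟩ := hn.2
    simp only [Finset.mem_range]; omega
  · intro n hn
    simp only [Finset.mem_range] at hn
    simp only [Finset.mem_filter, Finset.mem_range]
    exact ⟨by omega, ⟨n, by omega⟩⟩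
  · intro n hn
    simp only [Finset.mem_filter, Finset.mem_range] at hn
    obtain ⟨m, hm⟩ := hn.2
    omega
  · intro n hn
    omega
  · intro n hn
    simp only [Finset.mem_filter, Finset.mem_range] at hn
    obtain ⟨m, hm⟩ := hn.2
    congr 1
    omega

/-- If the Stieltjes transforms of compactly supported symmetric probability measures
solve the quadratic vector equation with variance matrix `S`, then the moments satisfy
`μ_{x,0} = 1`, the odd moments vanish, and the even moments satisfy the Catalan-type
recursion with weights `S`. -/
theorem qve_moment_recursion (N : ℕ) (hN : 1 ≤ N)
    (S : Matrix (Fin N) (Fin N) ℝ) (hsymS : S.IsSymm) (hSnn : ∀ x y, 0 ≤ S x y)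
    (ρ : Fin N → Measure ℝ) [∀ x, IsProbabilityMeasure (ρ x)]
    (hcomp : ∀ x, IsCompact (measSupport (ρ x)))
    (hsymm : ∀ x, (ρ x).map (fun τ => -τ) = ρ x)
    (m : Fin N → ℂ → ℂ)
    (hm : ∀ x (z : ℂ), m x z = ∫ τ, ((τ : ℂ) - z)⁻¹ ∂(ρ x))
    (hQVE : ∀ x (z : ℂ), 0 < z.im →
      -(m x z)⁻¹ = z + ∑ y, (S x y : ℂ) * m y z)
    (μmom : Fin N → ℕ → ℝ)
    (hμ : ∀ x k, μmom x k = ∫ τ, τ ^ k ∂(ρ x)) :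
    (∀ x, μmom x 0 = 1) ∧
      (∀ x k, μmom x (2 * k + 1) = 0) ∧
      (∀ x (k : ℕ), 1 ≤ k →
        μmom x (2 * k) = ∑ y, S x y *
          ∑ n ∈ Finset.range k, μmom x (2 * (k - n - 1)) * μmom y (2 * n)) := by
  -- Part 1 : zeroth moment
  have hzero : ∀ x, μmom x 0 = 1 := by
    intro x
    rw [hμ]
    simp
  -- Part 2 : odd moments vanish
  have hodd : ∀ x k, μmom x (2 * k + 1) = 0 := by
    intro x k
    have h1 : (∫ τ, τ ^ (2*k+1) ∂ρ x) = ∫ τ, (-τ) ^ (2*k+1) ∂ρ x := by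
      conv_lhs => rw [← hsymm x]
      exact integral_map measurable_neg.aemeasurable
        (continuous_pow (2*k+1)).aestronglyMeasurable
    have h2 : (∫ τ, (-τ) ^ (2*k+1) ∂ρ x) = -∫ τ, τ ^ (2*k+1) ∂ρ x := by
      have : ∀ τ : ℝ, (-τ) ^ (2*k+1) = -(τ ^ (2*k+1)) :=
        fun τ => Odd.neg_pow ⟨k, by ring⟩ τ
      simp_rw [this]
      exact integral_neg _
    rw [hμ]
    have := h1.trans h2
    linarith
  -- Uniform bound on supports
  obtain ⟨R, hR1, hRae⟩ : ∃ R : ℝ, 1 ≤ R ∧ ∀ x, ∀ᵐ τ ∂ρ x, |τ| ≤ R := by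
    have hbd : ∀ x : Fin N, ∃ r : ℝ, ∀ τ ∈ measSupport (ρ x), ‖τ‖ ≤ r :=
      fun x => isBounded_iff_forall_norm_le.mp (hcomp x).isBounded
    choose r hr using hbd
    refine ⟨1 + ∑ x, |r x|, le_add_of_nonneg_right (Finset.sum_nonneg fun _ _ => abs_nonneg _),
      fun x => ?_⟩
    filter_upwards [ae_mem_measSupport (ρ x)] with τ hτ
    have h1 : |τ| ≤ r x := by rw [← Real.norm_eq_abs]; exact hr x τ hτ
    have h3 : |r x| ≤ ∑ u, |r u| :=
      Finset.single_le_sum (fun i _ => abs_nonneg (r i)) (Finset.mem_univ x)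
    have h2 : r x ≤ |r x| := le_abs_self _
    linarith
  have hR0 : (0:ℝ) < R := lt_of_lt_of_le zero_lt_one hR1
  -- basic integrability
  have hint : ∀ x (f : ℝ → ℂ), Continuous f → ∀ C : ℝ,
      (∀ᵐ τ ∂ρ x, ‖f τ‖ ≤ C) → Integrable f (ρ x) :=
    fun x f hf C hC => ⟨hf.aestronglyMeasurable, HasFiniteIntegral.of_bounded hC⟩
  -- complex moments
  have hcmom : ∀ x k, (∫ τ, (τ:ℂ) ^ k ∂ρ x) = ((μmom x k : ℝ) : ℂ) := by
    intro x k
    rw [hμ]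
    rw [show (fun τ : ℝ => (τ:ℂ) ^ k) = (fun τ : ℝ => ((τ ^ k : ℝ) : ℂ)) by
      funext τ; push_cast; ring]
    exact integral_ofReal
  -- moment bound
  have hmombd : ∀ x k, |μmom x k| ≤ R ^ k := by
    intro x k
    rw [hμ, ← Real.norm_eq_abs]
    have h := norm_integral_le_of_norm_le_const (μ := ρ x)
      (f := fun τ : ℝ => τ ^ k) (C := R ^ k) ?_
    · simpa using h
    · filter_upwards [hRae x] with τ hτ
      rw [Real.norm_eq_abs, abs_pow]
      exact pow_le_pow_left₀ (abs_nonneg τ) hτ k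
  -- the coefficient functions
  set c : Fin N → ℕ → ℂ := fun u i => ((μmom u i : ℝ) : ℂ) with hc
  set a : Fin N → ℕ → ℂ := fun x i => if i = 0 then 0 else
    ((-(μmom x i) + ∑ y, S x y *
      ∑ n ∈ Finset.range (i-1), μmom x (i-2-n) * μmom y n : ℝ) : ℂ) with ha
  -- the main analytic bound
  have hbound : ∀ x (J : ℕ), ∃ C : ℝ, ∀ t : ℝ, R ≤ t →
      ‖∑ i ∈ Finset.range (J+1), a x i * ((t:ℂ) * Complex.I)⁻¹ ^ i‖ ≤ C / t ^ (J+1) := by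
    intro x J
    set D : ℝ := ((J:ℝ)+1)^2 * R^(2*J) + 2*((J:ℝ)+1)*R^(2*J+1) + R^(2*J+2) with hDdef
    have hD0 : 0 ≤ D := by positivity
    refine ⟨R^(J+1) + (∑ y, |S x y|) * D, ?_⟩
    intro t ht
    have ht1 : (1:ℝ) ≤ t := le_trans hR1 ht
    have ht0 : (0:ℝ) < t := lt_of_lt_of_le zero_lt_one ht1
    have hC0 : (0:ℝ) ≤ R^(J+1) + (∑ y, |S x y|) * D := by positivity
    rcases Nat.eq_zero_or_pos J with hJ0 | hJpos
    · subst hJ0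
      have ha0 : a x 0 = 0 := by simp [ha]
      simpa [ha0] using div_nonneg hC0 (pow_nonneg (le_of_lt ht0) 1)
    set z : ℂ := (t:ℂ) * Complex.I with hzdef
    set w : ℂ := z⁻¹ with hwdef
    have hzim : z.im = t := by simp [hzdef]
    have hzne : z ≠ 0 := fun h => by rw [h] at hzim; simp at hzim; linarith
    have hzw : z * w = 1 := mul_inv_cancel₀ hzne
    have hznorm : ‖z‖ = t := by
      rw [hzdef, norm_mul, Complex.norm_I, Complex.norm_real, Real.norm_eq_abs,
        abs_of_pos ht0, mul_one]
    have hwnorm : ‖w‖ = 1/t := by rw [hwdef, norm_inv, hznorm, one_div]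
    have hw1 : ‖w‖ ≤ 1 := by rw [hwnorm]; exact (div_le_one ht0).mpr ht1
    -- τ - z is nonzero and its inverse is bounded
    have hτz : ∀ τ : ℝ, (τ:ℂ) - z ≠ 0 := by
      intro τ h
      have h2 : ((τ:ℂ) - z).im = 0 := by rw [h]; simp
      rw [Complex.sub_im, hzim, Complex.ofReal_im] at h2
      linarith
    have hτznorm : ∀ τ : ℝ, ‖((τ:ℂ) - z)⁻¹‖ ≤ 1/t := by
      intro τ
      rw [norm_inv]
      have h1 : t ≤ ‖(τ:ℂ) - z‖ := by
        have h2 := Complex.abs_im_le_norm ((τ:ℂ) - z)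
        rw [Complex.sub_im, hzim, Complex.ofReal_im, zero_sub, abs_neg, abs_of_pos ht0] at h2
        exact h2
      rw [one_div]
      exact inv_anti₀ ht0 h1
    -- integrability
    have hcont_inv : Continuous (fun τ : ℝ => ((τ:ℂ) - z)⁻¹) :=
      (Complex.continuous_ofReal.sub continuous_const).inv₀ (fun τ => hτz τ)
    have hcont_pow : ∀ i : ℕ, Continuous (fun τ : ℝ => (τ:ℂ)^i) :=
      fun i => Complex.continuous_ofReal.pow i
    have hint_inv : ∀ u : Fin N, Integrable (fun τ : ℝ => ((τ:ℂ) - z)⁻¹) (ρ u) := by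
      intro u
      exact hint u _ hcont_inv (1/t) (Filter.Eventually.of_forall hτznorm)
    have hint_pow : ∀ u (i : ℕ), Integrable (fun τ : ℝ => (τ:ℂ)^i) (ρ u) := by
      intro u i
      refine hint u _ (hcont_pow i) (R^i) ?_
      filter_upwards [hRae u] with τ hτ
      rw [norm_pow, Complex.norm_real, Real.norm_eq_abs]
      exact pow_le_pow_left₀ (abs_nonneg τ) hτ i
    have hint_powinv : ∀ u (i : ℕ),
        Integrable (fun τ : ℝ => (τ:ℂ)^i * ((τ:ℂ) - z)⁻¹) (ρ u) := by
      intro u i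
      refine hint u _ ((hcont_pow i).mul hcont_inv) (R^i * (1/t)) ?_
      filter_upwards [hRae u] with τ hτ
      rw [norm_mul]
      refine mul_le_mul ?_ (hτznorm τ) (norm_nonneg _) (by positivity)
      rw [norm_pow, Complex.norm_real, Real.norm_eq_abs]
      exact pow_le_pow_left₀ (abs_nonneg τ) hτ i
    -- truncated expansion of the Stieltjes transform
    have hexp : ∀ u, m u z = -(∑ i ∈ Finset.range (J+1), c u i * w^(i+1))
        + w^(J+1) * ∫ τ, (τ:ℂ)^(J+1) * ((τ:ℂ) - z)⁻¹ ∂ρ u := by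
      intro u
      rw [hm u z]
      rw [integral_congr_ae (Filter.Eventually.of_forall
        (fun τ : ℝ => geom_expand (τ:ℂ) z hzne (hτz τ) J))]
      have hI1 : Integrable (fun τ : ℝ =>
          -(∑ i ∈ Finset.range (J+1), (τ:ℂ)^i * w^(i+1))) (ρ u) :=
        (integrable_finset_sum _ (fun i _ => (hint_pow u i).mul_const (w^(i+1)))).neg
      have hI2 : Integrable (fun τ : ℝ =>
          w^(J+1) * ((τ:ℂ)^(J+1) * ((τ:ℂ) - z)⁻¹)) (ρ u) :=
        (hint_powinv u (J+1)).const_mul (w^(J+1))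
      rw [integral_add hI1 hI2]
      rw [integral_neg, integral_finset_sum _ (fun i _ => (hint_pow u i).mul_const _),
        integral_const_mul]
      congr 1
      congr 1
      refine Finset.sum_congr rfl fun i _ => ?_
      rw [integral_mul_const, hcmom]
    set Q : Fin N → ℂ := fun u => ∑ i ∈ Finset.range (J+1), c u i * w^i with hQdef
    set P : Fin N → ℂ := fun u => ∑ i ∈ Finset.range (J+1), c u i * w^(i+1) with hPdef
    set E : Fin N → ℂ := fun u =>
      w^(J+1) * ∫ τ, (τ:ℂ)^(J+1) * ((τ:ℂ) - z)⁻¹ ∂ρ u with hEdef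
    have hmE : ∀ u, m u z = -P u + E u := hexp
    have hPQ : ∀ u, P u = w * Q u := by
      intro u
      rw [hPdef, hQdef]
      dsimp only
      rw [Finset.mul_sum]
      refine Finset.sum_congr rfl fun i _ => ?_
      rw [pow_succ]
      ring
    have hcbd : ∀ u i, ‖c u i‖ ≤ R^i := by
      intro u i
      rw [hc]
      dsimp only
      rw [Complex.norm_real, Real.norm_eq_abs]
      exact hmombd u i
    have hcbdJ : ∀ u, ∀ i ∈ Finset.range (J+1), ‖c u i‖ ≤ R^J := by
      intro u i hi
      refine le_trans (hcbd u i) (pow_le_pow_right₀ hR1 ?_)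
      simp only [Finset.mem_range] at hi
      omega
    have hQbd : ∀ u, ‖Q u‖ ≤ ((J:ℝ)+1) * R^J := by
      intro u
      refine le_trans (norm_sum_le _ _) ?_
      have hterm : ∀ i ∈ Finset.range (J+1), ‖c u i * w^i‖ ≤ R^J := by
        intro i hi
        rw [norm_mul, norm_pow]
        calc ‖c u i‖ * ‖w‖^i ≤ R^J * 1 :=
              mul_le_mul (hcbdJ u i hi) (pow_le_one₀ (norm_nonneg w) hw1)
                (by positivity) (by positivity)
          _ = R^J := mul_one _
      refine le_trans (Finset.sum_le_sum hterm) ?_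
      rw [Finset.sum_const, Finset.card_range, nsmul_eq_mul]
      push_cast
      exact le_rfl
    have hIbd : ∀ u, ‖∫ τ, (τ:ℂ)^(J+1) * ((τ:ℂ)-z)⁻¹ ∂ρ u‖ ≤ R^(J+1) * (1/t) := by
      intro u
      have h := norm_integral_le_of_norm_le_const (μ := ρ u)
        (f := fun τ : ℝ => (τ:ℂ)^(J+1) * ((τ:ℂ)-z)⁻¹) (C := R^(J+1) * (1/t)) ?_
      · simpa using h
      · filter_upwards [hRae u] with τ hτ
        rw [norm_mul]
        refine mul_le_mul ?_ (hτznorm τ) (norm_nonneg _) (by positivity)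
        rw [norm_pow, Complex.norm_real, Real.norm_eq_abs]
        exact pow_le_pow_left₀ (abs_nonneg τ) hτ _
    have hEbd : ∀ u, ‖E u‖ ≤ R^(J+1) / t^(J+2) := by
      intro u
      rw [hEdef]
      dsimp only
      rw [norm_mul, norm_pow, hwnorm]
      calc (1/t)^(J+1) * ‖∫ τ, (τ:ℂ)^(J+1) * ((τ:ℂ)-z)⁻¹ ∂ρ u‖
          ≤ (1/t)^(J+1) * (R^(J+1) * (1/t)) :=
            mul_le_mul_of_nonneg_left (hIbd u) (by positivity)
        _ = R^(J+1) / t^(J+2) := by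
            rw [div_pow, one_pow, pow_succ]
            field_simp
            ring
    have hPbd : ∀ u, ‖P u‖ ≤ ((J:ℝ)+1) * R^J := by
      intro u
      rw [hPQ u, norm_mul, hwnorm]
      calc 1/t * ‖Q u‖ ≤ 1 * (((J:ℝ)+1) * R^J) :=
            mul_le_mul ((div_le_one ht0).mpr ht1) (hQbd u) (norm_nonneg _) zero_le_one
        _ = ((J:ℝ)+1) * R^J := one_mul _
    -- the QVE identity
    have hGid : (1:ℂ) + z * m x z + m x z * (∑ y, ((S x y : ℝ):ℂ) * m y z) = 0 := by
      have hzre : z.re = 0 := by simp [hzdef]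
      have hpt : ∀ τ : ℝ, (((τ:ℂ) - z)⁻¹).im = t / (τ^2 + t^2) := by
        intro τ
        rw [Complex.inv_im, Complex.sub_im, hzim, Complex.ofReal_im, zero_sub, neg_neg,
          Complex.normSq_apply, Complex.sub_re, Complex.sub_im, Complex.ofReal_re,
          Complex.ofReal_im, hzim, hzre]
        ring_nf
      have him : (m x z).im = ∫ τ, (((τ:ℂ) - z)⁻¹).im ∂ρ x := by
        rw [hm x z]
        exact (integral_im (hint_inv x)).symm
      have hεle : t/(R^2+t^2) ≤ ∫ τ, (((τ:ℂ) - z)⁻¹).im ∂ρ x := by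
        have hconst : ∫ (_ : ℝ), (t/(R^2+t^2)) ∂ρ x = t/(R^2+t^2) := by
          simp [measure_univ]
        rw [← hconst]
        refine integral_mono_ae (integrable_const _) (hint_inv x).im ?_
        filter_upwards [hRae x] with τ hτ
        rw [hpt τ]
        have h1 : τ^2 + t^2 ≤ R^2 + t^2 := by nlinarith [sq_abs τ, abs_nonneg τ]
        have h2 : (0:ℝ) < τ^2 + t^2 := by positivity
        exact div_le_div_of_nonneg_left (le_of_lt ht0) h2 h1
      have hmpos : 0 < (m x z).im := by
        rw [him]
        refine lt_of_lt_of_le ?_ hεle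
        positivity
      have hmne : m x z ≠ 0 := by
        intro h
        rw [h] at hmpos
        simp at hmpos
      have hzim0 : 0 < z.im := by rw [hzim]; exact ht0
      have hq := hQVE x z hzim0
      have h2 : m x z * (-(m x z)⁻¹) = m x z * (z + ∑ y, ((S x y : ℝ):ℂ) * m y z) := by
        rw [hq]
      rw [mul_neg, mul_inv_cancel₀ hmne] at h2
      linear_combination -h2
    -- key algebraic identity for the coefficient polynomial
    set V : Fin N → ℕ → ℂ := fun y i =>
      ((∑ n ∈ Finset.range (i-1), μmom x (i-2-n) * μmom y n : ℝ) : ℂ) with hVdef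
    set T : Fin N → ℂ := fun y => ∑ i ∈ Finset.Ico 1 (J+1), V y i * w^i with hTdef
    have hL1 : ∑ i ∈ Finset.range (J+1), a x i * w^i
        = 1 - z * P x + ∑ y, ((S x y : ℝ):ℂ) * T y := by
      have ha0 : a x 0 = 0 := by simp [ha]
      have hzP : z * P x = 1 + ∑ i ∈ Finset.Ico 1 (J+1), c x i * w^i := by
        rw [hPdef]
        dsimp only
        rw [Finset.mul_sum]
        rw [Finset.sum_congr rfl (fun i (_ : i ∈ Finset.range (J+1)) =>
          show z * (c x i * w^(i+1)) = c x i * w^i by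
            rw [pow_succ']
            calc z * (c x i * (w * w^i)) = (z*w) * (c x i * w^i) := by ring
              _ = c x i * w^i := by rw [hzw, one_mul])]
        rw [Finset.range_eq_Ico, Finset.sum_eq_sum_Ico_succ_bot (by omega : 0 < J+1)]
        congr 1
        rw [pow_zero, mul_one, hc]
        dsimp only
        rw [hzero x]
        norm_num
      rw [Finset.range_eq_Ico, Finset.sum_eq_sum_Ico_succ_bot (by omega : 0 < J+1),
        ha0, zero_mul, zero_add]
      rw [Finset.sum_congr rfl (fun i (hi : i ∈ Finset.Ico 1 (J+1)) =>
        show a x i * w^i = -(c x i * w^i) + ∑ y, ((S x y : ℝ):ℂ) * (V y i * w^i) by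
          have hi1 : i ≠ 0 := by
            simp only [Finset.mem_Ico] at hi
            omega
          simp only [ha, hVdef, hc]
          rw [if_neg hi1]
          push_cast
          rw [add_mul, neg_mul, Finset.sum_mul]
          congr 1
          refine Finset.sum_congr rfl fun y _ => by ring)]
      rw [Finset.sum_add_distrib, Finset.sum_comm]
      have hTy : ∀ y, ∑ i ∈ Finset.Ico 1 (J+1), ((S x y : ℝ):ℂ) * (V y i * w^i)
          = ((S x y : ℝ):ℂ) * T y := by
        intro y
        rw [hTdef]
        dsimp only
        rw [Finset.mul_sum]
      rw [Finset.sum_congr rfl (fun y _ => hTy y)]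
      rw [Finset.sum_neg_distrib]
      linear_combination hzP
    have hL2 : ∑ i ∈ Finset.range (J+1), a x i * w^i
        = -z * E x + ∑ y, ((S x y : ℝ):ℂ) * (T y - m x z * m y z) := by
      have hs1 : m x z * (∑ y, ((S x y : ℝ):ℂ) * m y z)
          = ∑ y, ((S x y : ℝ):ℂ) * (m x z * m y z) := by
        rw [Finset.mul_sum]
        exact Finset.sum_congr rfl fun y _ => by ring
      have hs2 : ∑ y, ((S x y : ℝ):ℂ) * (T y - m x z * m y z)
          = (∑ y, ((S x y : ℝ):ℂ) * T y) - ∑ y, ((S x y : ℝ):ℂ) * (m x z * m y z) := by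
        rw [← Finset.sum_sub_distrib]
        exact Finset.sum_congr rfl fun y _ => by ring
      have hmEx := hmE x
      rw [hL1]
      linear_combination hGid - hs1 - hs2 - z * hmEx
    -- per-y estimate
    have hmono : ∀ (p q : ℕ) (A : ℝ), 0 ≤ A → q ≤ p → A / t^p ≤ A / t^q := by
      intro p q A hA hpq
      exact div_le_div_of_nonneg_left hA (pow_pos ht0 q) (pow_le_pow_right₀ ht1 hpq)
    have hper : ∀ y, ‖T y - m x z * m y z‖ ≤ D / t^(J+1) := by
      intro y
      have hT2 : T y = w^2 * ∑ k ∈ Finset.range (J-1),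
          (∑ n ∈ Finset.range (k+1), c x (k-n) * c y n) * w^k := by
        rw [hTdef]
        dsimp only
        rw [Finset.sum_eq_sum_Ico_succ_bot (by omega : 1 < J+1)]
        have hV1 : V y 1 = 0 := by simp [hVdef]
        rw [hV1, zero_mul, zero_add, Finset.sum_Ico_eq_sum_range]
        have he : J+1-2 = J-1 := by omega
        rw [he, Finset.mul_sum]
        refine Finset.sum_congr rfl fun k hk => ?_
        have hidx : V y (2+k) = ∑ n ∈ Finset.range (k+1), c x (k-n) * c y n := by
          simp only [hVdef, hc]
          have e1 : 2+k-1 = k+1 := by omega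
          rw [e1]
          push_cast
          refine Finset.sum_congr rfl fun n hn => ?_
          have e2 : 2+k-2-n = k-n := by omega
          rw [e2]
        rw [hidx, pow_add]
        ring
      have hcs := cauchy_split (c x) (c y) w (J+1) (J-1) (by omega)
      have hP2 : P x * P y = w^2 * ((∑ i ∈ Finset.range (J+1), c x i * w^i)
          * (∑ n ∈ Finset.range (J+1), c y n * w^n)) := by
        rw [hPQ x, hPQ y, hQdef]
        dsimp only
        ring
      set H : ℂ := ∑ p ∈ (Finset.range (J+1) ×ˢ Finset.range (J+1)).filter
          (fun p => ¬ p.1 + p.2 < J-1), c x p.1 * c y p.2 * w ^ (p.1 + p.2) with hHdef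
      have hTP : T y - P x * P y = -(w^2 * H) := by
        rw [hT2, hP2, hcs]
        ring
      have hHbd : ‖H‖ ≤ (((J:ℝ)+1)^2) * (R^J * R^J * ‖w‖^(J-1)) := by
        have h := high_bound (c x) (c y) w hw1 (J+1) (J-1) (R^J) (R^J)
          (by positivity) (by positivity)
          (fun i hi => hcbdJ x i (Finset.mem_range.mpr hi))
          (fun i hi => hcbdJ y i (Finset.mem_range.mpr hi))
        rw [hHdef]
        refine le_trans h ?_
        push_cast
        exact le_rfl
      have hA : ‖T y - P x * P y‖ ≤ ((J:ℝ)+1)^2 * R^(2*J) / t^(J+1) := by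
        rw [hTP, norm_neg, norm_mul, norm_pow, hwnorm]
        calc (1/t)^2 * ‖H‖
            ≤ (1/t)^2 * (((J:ℝ)+1)^2 * (R^J * R^J * (1/t)^(J-1))) := by
              rw [← hwnorm]
              exact mul_le_mul_of_nonneg_left hHbd (by positivity)
          _ = ((J:ℝ)+1)^2 * R^(2*J) / t^(J+1) := by
              have h2 : ((1:ℝ)/t)^2 * (1/t)^(J-1) = (1/t)^(J+1) := by
                rw [← pow_add]
                congr 1
                omega
              have h3 : R^J * R^J = R^(2*J) := by
                rw [← pow_add]
                congr 1
                omega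
              calc ((1:ℝ)/t)^2 * (((J:ℝ)+1)^2 * (R^J * R^J * (1/t)^(J-1)))
                  = ((J:ℝ)+1)^2 * (R^J * R^J) * ((1/t)^2 * (1/t)^(J-1)) := by ring
                _ = ((J:ℝ)+1)^2 * R^(2*J) * (1/t)^(J+1) := by rw [h2, h3]
                _ = ((J:ℝ)+1)^2 * R^(2*J) / t^(J+1) := by
                    rw [div_pow, one_pow, mul_one_div]
      have hB : ‖P x * E y‖ ≤ ((J:ℝ)+1) * R^(2*J+1) / t^(J+1) := by
        rw [norm_mul]
        calc ‖P x‖ * ‖E y‖ ≤ (((J:ℝ)+1) * R^J) * (R^(J+1)/t^(J+2)) :=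
              mul_le_mul (hPbd x) (hEbd y) (norm_nonneg _) (by positivity)
          _ = (((J:ℝ)+1) * R^(2*J+1)) / t^(J+2) := by
              rw [show 2*J+1 = J + (J+1) by omega, pow_add]
              ring
          _ ≤ ((J:ℝ)+1) * R^(2*J+1) / t^(J+1) := hmono (J+2) (J+1) _ (by positivity) (by omega)
      have hC : ‖E x * P y‖ ≤ ((J:ℝ)+1) * R^(2*J+1) / t^(J+1) := by
        rw [norm_mul]
        calc ‖E x‖ * ‖P y‖ ≤ (R^(J+1)/t^(J+2)) * (((J:ℝ)+1) * R^J) :=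
              mul_le_mul (hEbd x) (hPbd y) (norm_nonneg _) (by positivity)
          _ = (((J:ℝ)+1) * R^(2*J+1)) / t^(J+2) := by
              rw [show 2*J+1 = J + (J+1) by omega, pow_add]
              ring
          _ ≤ ((J:ℝ)+1) * R^(2*J+1) / t^(J+1) := hmono (J+2) (J+1) _ (by positivity) (by omega)
      have hD2 : ‖E x * E y‖ ≤ R^(2*J+2) / t^(J+1) := by
        rw [norm_mul]
        calc ‖E x‖ * ‖E y‖ ≤ (R^(J+1)/t^(J+2)) * (R^(J+1)/t^(J+2)) :=
              mul_le_mul (hEbd x) (hEbd y) (norm_nonneg _) (by positivity)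
          _ = R^(2*J+2) / t^(2*J+4) := by
              rw [show 2*J+2 = (J+1) + (J+1) by omega, show 2*J+4 = (J+2) + (J+2) by omega,
                pow_add, pow_add]
              ring
          _ ≤ R^(2*J+2) / t^(J+1) := hmono (2*J+4) (J+1) _ (by positivity) (by omega)
      have hsum : T y - m x z * m y z
          = (T y - P x * P y) + P x * E y + E x * P y - E x * E y := by
        rw [hmE x, hmE y]
        ring
      rw [hsum]
      calc ‖(T y - P x * P y) + P x * E y + E x * P y - E x * E y‖
          ≤ ‖(T y - P x * P y) + P x * E y + E x * P y‖ + ‖E x * E y‖ := norm_sub_le _ _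
        _ ≤ ‖(T y - P x * P y) + P x * E y‖ + ‖E x * P y‖ + ‖E x * E y‖ := by
            gcongr
            exact norm_add_le _ _
        _ ≤ ‖T y - P x * P y‖ + ‖P x * E y‖ + ‖E x * P y‖ + ‖E x * E y‖ := by
            gcongr
            exact norm_add_le _ _
        _ ≤ ((J:ℝ)+1)^2 * R^(2*J) / t^(J+1) + ((J:ℝ)+1) * R^(2*J+1) / t^(J+1)
            + ((J:ℝ)+1) * R^(2*J+1) / t^(J+1) + R^(2*J+2) / t^(J+1) := by
            exact add_le_add (add_le_add (add_le_add hA hB) hC) hD2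
        _ = D / t^(J+1) := by
            rw [hDdef]
            ring
    -- final assembly
    rw [hL2]
    refine le_trans (norm_add_le _ _) ?_
    have h1 : ‖-z * E x‖ ≤ R^(J+1) / t^(J+1) := by
      rw [norm_mul, norm_neg, hznorm]
      calc t * ‖E x‖ ≤ t * (R^(J+1) / t^(J+2)) :=
            mul_le_mul_of_nonneg_left (hEbd x) (le_of_lt ht0)
        _ = R^(J+1) / t^(J+1) := by
            rw [pow_succ]
            field_simp
            ring
    have h2 : ‖∑ y, ((S x y : ℝ):ℂ) * (T y - m x z * m y z)‖
        ≤ (∑ y, |S x y|) * (D / t^(J+1)) := by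
      refine le_trans (norm_sum_le _ _) ?_
      rw [Finset.sum_mul]
      refine Finset.sum_le_sum fun y _ => ?_
      rw [norm_mul, Complex.norm_real, Real.norm_eq_abs]
      exact mul_le_mul_of_nonneg_left (hper y) (abs_nonneg _)
    calc ‖-z * E x‖ + ‖∑ y, ((S x y : ℝ):ℂ) * (T y - m x z * m y z)‖
        ≤ R^(J+1) / t^(J+1) + (∑ y, |S x y|) * (D / t^(J+1)) := add_le_add h1 h2
      _ = (R^(J+1) + (∑ y, |S x y|) * D) / t^(J+1) := by ring
  have hvanish : ∀ x i, a x i = 0 := by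
    intro x i
    obtain ⟨C, hC⟩ := hbound x i
    exact extract_coeffs (a x) i R C hR1 hC i le_rfl
  -- full recursion
  have hrec : ∀ x i, 1 ≤ i →
      μmom x i = ∑ y, S x y * ∑ n ∈ Finset.range (i-1), μmom x (i-2-n) * μmom y n := by
    intro x i hi
    have h := hvanish x i
    rw [ha] at h
    simp only [Nat.pos_iff_ne_zero.mp hi, if_false] at h
    rw [Complex.ofReal_eq_zero] at h
    linarith
  refine ⟨hzero, hodd, ?_⟩
  -- even recursion
  intro x k hk
  have h := hrec x (2*k) (by omega)
  have hsplit : ∀ y : Fin N, ∑ n ∈ Finset.range (2*k-1), μmom x (2*k-2-n) * μmom y n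
      = ∑ n ∈ Finset.range k, μmom x (2*(k-n-1)) * μmom y (2*n) := by
    intro y
    have heo := even_odd_split (fun n => μmom x (2*k-2-n) * μmom y n) k hk
      (fun n => by
        show μmom x (2*k-2-(2*n+1)) * μmom y (2*n+1) = 0
        rw [hodd y n, mul_zero])
    rw [heo]
    refine Finset.sum_congr rfl fun n hn => ?_
    simp only [Finset.mem_range] at hn
    show μmom x (2*k-2-2*n) * μmom y (2*n) = _
    have e1 : 2*k-2-2*n = 2*(k-n-1) := by omega
    rw [e1]
  rw [h]
  exact Finset.sum_congr rfl fun y _ => by rw [hsplit y]
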